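/- Let X be a locally compact, Hausdorff, connected space. A quasi-linear functional ρ on C₀(X) is monotone (i.e., f ≤ g implies ρ(f) ≤ ρ(g) for all f, g ∈ C₀(X)) if and only if it is bounded (i.e., ‖ρ‖ = sup{ρ(f) : f ∈ C₀(X), 0 ≤ f ≤ 1} < ∞). -/

import Mathlib

open Set Filter Topology MeasureTheory
open scoped ENNReal BoundedContinuousFunction

universe u

/-- A topological measure on `X`: a set function on subsets of `X` (only its values on open
and closed sets matter), not identically `∞` on open/closed sets, satisfying (TM1)–(TM3). -/
structure TopMeasure (X : Type u) [TopologicalSpace X] where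
  toFun : Set X → ℝ≥0∞
  not_all_top : ∃ A : Set X, (IsOpen A ∨ IsClosed A) ∧ toFun A ≠ ∞
  tm1 : ∀ A B : Set X, Disjoint A B → (IsOpen A ∨ IsCompact A) → (IsOpen B ∨ IsCompact B) →
      (IsOpen (A ∪ B) ∨ IsCompact (A ∪ B)) → toFun (A ∪ B) = toFun A + toFun B
  tm2 : ∀ U : Set X, IsOpen U → toFun U = ⨆ K ∈ {K : Set X | IsCompact K ∧ K ⊆ U}, toFun K
  tm3 : ∀ F : Set X, IsClosed F → toFun F = ⨅ U ∈ {U : Set X | IsOpen U ∧ F ⊆ U}, toFun U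

/-- `μ` is compact-finite. -/
def TopMeasure.CompactFinite {X : Type u} [TopologicalSpace X] (μ : TopMeasure X) : Prop :=
  ∀ K : Set X, IsCompact K → μ.toFun K ≠ ∞

/-- The set of compactly supported continuous functions, inside `C_b(X)`. -/
def CcS (X : Type u) [TopologicalSpace X] : Set (X →ᵇ ℝ) :=
  {f | HasCompactSupport (f : X → ℝ)}

/-- The set of continuous functions vanishing at infinity, inside `C_b(X)`. -/
def C0S (X : Type u) [TopologicalSpace X] : Set (X →ᵇ ℝ) :=
  {f | Tendsto (f : X → ℝ) (cocompact X) (nhds 0)}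

/-- `𝔅` is a (non-unital) subalgebra of `C_b(X)`. -/
def IsSubalgS {X : Type u} [TopologicalSpace X] (𝔅 : Set (X →ᵇ ℝ)) : Prop :=
  (∀ f g : X →ᵇ ℝ, f ∈ 𝔅 → g ∈ 𝔅 → f + g ∈ 𝔅) ∧
  (∀ f g : X →ᵇ ℝ, f ∈ 𝔅 → g ∈ 𝔅 → f * g ∈ 𝔅) ∧
  (∀ (c : ℝ) (f : X →ᵇ ℝ), f ∈ 𝔅 → c • f ∈ 𝔅)

/-- The singly generated subalgebra `B(h)`: the smallest closed (in `𝔅`) subalgebra of `𝔅`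
containing `h`. -/
def sgen {X : Type u} [TopologicalSpace X] (𝔅 : Set (X →ᵇ ℝ)) (h : X →ᵇ ℝ) :
    Set (X →ᵇ ℝ) :=
  ⋂₀ {S : Set (X →ᵇ ℝ) | S ⊆ 𝔅 ∧ h ∈ S ∧
      (∀ f g : X →ᵇ ℝ, f ∈ S → g ∈ S → f + g ∈ S) ∧
      (∀ f g : X →ᵇ ℝ, f ∈ S → g ∈ S → f * g ∈ S) ∧
      (∀ (c : ℝ) (f : X →ᵇ ℝ), f ∈ S → c • f ∈ S) ∧
      IsClosed {x : ↥𝔅 | (x : X →ᵇ ℝ) ∈ S}}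

/-- A signed quasi-linear functional on `𝔅` (QI1), (QI2). -/
structure SignedQLF {X : Type u} [TopologicalSpace X] (𝔅 : Set (X →ᵇ ℝ)) where
  toFun : (X →ᵇ ℝ) → ℝ
  smul_eq : ∀ (a : ℝ) (f : X →ᵇ ℝ), f ∈ 𝔅 → toFun (a • f) = a * toFun f
  add_eq : ∀ h ∈ 𝔅, ∀ f g : X →ᵇ ℝ, f ∈ sgen 𝔅 h → g ∈ sgen 𝔅 h →
      toFun (f + g) = toFun f + toFun g

/-- A (positive) quasi-linear functional on `𝔅` (QI1)–(QI3). -/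
structure QLF {X : Type u} [TopologicalSpace X] (𝔅 : Set (X →ᵇ ℝ)) extends SignedQLF 𝔅 where
  pos : ∀ f : X →ᵇ ℝ, f ∈ 𝔅 → 0 ≤ f → 0 ≤ toFun f

/-- `‖ρ‖ = sup {ρ(f) : f ∈ 𝔅, 0 ≤ f ≤ 1}`, as an extended real number. -/
noncomputable def qnorm {X : Type u} [TopologicalSpace X] {𝔅 : Set (X →ᵇ ℝ)} (ρ : QLF 𝔅) :
    ℝ≥0∞ :=
  ⨆ f ∈ {f : X →ᵇ ℝ | f ∈ 𝔅 ∧ 0 ≤ f ∧ f ≤ 1}, ENNReal.ofReal (ρ.toFun f)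

/-- `m` is the measure `m_f` on `ℝ` associated with a finite topological measure `μ` and
`f ∈ C₀(X)` (case (A)): `m(W) = μ(f⁻¹(W))` for every open `W ⊆ ℝ`. -/
def IsMfA {X : Type u} [TopologicalSpace X] (μ : TopMeasure X) (f : X →ᵇ ℝ)
    (m : Measure ℝ) : Prop :=
  ∀ W : Set ℝ, IsOpen W → m W = μ.toFun ((f : X → ℝ) ⁻¹' W)

/-- `m` is the measure `m_f` on `ℝ` associated with a compact-finite topological measure `μ`
and `f ∈ C_c(X)` (case (B)): `m(W) = μ(f⁻¹(W \ {0}))` for every open `W ⊆ ℝ`. -/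
def IsMfB {X : Type u} [TopologicalSpace X] (μ : TopMeasure X) (f : X →ᵇ ℝ)
    (m : Measure ℝ) : Prop :=
  ∀ W : Set ℝ, IsOpen W → m W = μ.toFun ((f : X → ℝ) ⁻¹' (W \ {0}))

/-- The support of a (Borel) measure on `ℝ`. -/
def msupp (m : Measure ℝ) : Set ℝ := {x : ℝ | ∀ U ∈ nhds x, 0 < m U}

/-- The set function `μ_ρ` on open sets:
`μ_ρ(U) = sup {ρ(f) : f ∈ C_c(X), 0 ≤ f ≤ 1, supp f ⊆ U}`. -/
noncomputable def muO {X : Type u} [TopologicalSpace X] {𝔅 : Set (X →ᵇ ℝ)} (ρ : QLF 𝔅)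
    (U : Set X) : ℝ≥0∞ :=
  ⨆ f ∈ {f : X →ᵇ ℝ | f ∈ CcS X ∧ 0 ≤ f ∧ f ≤ 1 ∧ tsupport (f : X → ℝ) ⊆ U},
    ENNReal.ofReal (ρ.toFun f)

/-- The set function `μ_ρ` on closed sets: `μ_ρ(F) = inf {μ_ρ(U) : U open, F ⊆ U}`. -/
noncomputable def muC {X : Type u} [TopologicalSpace X] {𝔅 : Set (X →ᵇ ℝ)} (ρ : QLF 𝔅)
    (F : Set X) : ℝ≥0∞ :=
  ⨅ U ∈ {U : Set X | IsOpen U ∧ F ⊆ U}, muO ρ U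

open Classical in
/-- The set function `μ_ρ`. -/
noncomputable def muR {X : Type u} [TopologicalSpace X] {𝔅 : Set (X →ᵇ ℝ)} (ρ : QLF 𝔅) :
    Set X → ℝ≥0∞ :=
  fun A => if IsOpen A then muO ρ A else muC ρ A

/-- `ρ = ρ_μ` on `C₀(X)` (case (A)): for every `f ∈ C₀(X)` and every measure `m_f`
associated with `μ` and `f`, `ρ(f) = ∫_ℝ id dm_f`. -/
def ReprA {X : Type u} [TopologicalSpace X] {𝔅 : Set (X →ᵇ ℝ)} (μ : TopMeasure X)
    (ρ : QLF 𝔅) : Prop :=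
  ∀ f ∈ C0S X, ∀ m : Measure ℝ, IsMfA μ f m → ρ.toFun f = ∫ t, t ∂m

/-- `ρ = ρ_μ` on `C_c(X)` (case (B)). -/
def ReprB {X : Type u} [TopologicalSpace X] {𝔅 : Set (X →ᵇ ℝ)} (μ : TopMeasure X)
    (ρ : QLF 𝔅) : Prop :=
  ∀ f ∈ CcS X, ∀ m : Measure ℝ, IsMfB μ f m → ρ.toFun f = ∫ t, t ∂m


section QlfAux

open BoundedContinuousFunction
open scoped ContinuousMapZero

variable {X : Type u} [TopologicalSpace X]

lemma qlf_bcf_le_iff {f g : X →ᵇ ℝ} : f ≤ g ↔ ∀ x, f x ≤ g x := Iff.rfl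

lemma qlf_C0S_zero : (0 : X →ᵇ ℝ) ∈ C0S X := by
  exact (tendsto_const_nhds : Tendsto (fun _ : X => (0:ℝ)) (cocompact X) (nhds 0))

lemma qlf_C0S_add {f g : X →ᵇ ℝ} (hf : f ∈ C0S X) (hg : g ∈ C0S X) : f + g ∈ C0S X := by
  have := hf.add hg
  rw [add_zero] at this
  exact this

lemma qlf_C0S_mul {f g : X →ᵇ ℝ} (hf : f ∈ C0S X) (hg : g ∈ C0S X) : f * g ∈ C0S X := by
  have := hf.mul hg
  rw [mul_zero] at this
  exact this

lemma qlf_C0S_smul (c : ℝ) {f : X →ᵇ ℝ} (hf : f ∈ C0S X) : c • f ∈ C0S X := by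
  have := hf.const_mul c
  simpa [C0S] using this

lemma qlf_C0S_mem_family {h : X →ᵇ ℝ} (hh : h ∈ C0S X) :
    (C0S X) ∈ {S : Set (X →ᵇ ℝ) | S ⊆ C0S X ∧ h ∈ S ∧
      (∀ f g : X →ᵇ ℝ, f ∈ S → g ∈ S → f + g ∈ S) ∧
      (∀ f g : X →ᵇ ℝ, f ∈ S → g ∈ S → f * g ∈ S) ∧
      (∀ (c : ℝ) (f : X →ᵇ ℝ), f ∈ S → c • f ∈ S) ∧
      IsClosed {x : ↥(C0S X) | (x : X →ᵇ ℝ) ∈ C0S X}} := by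
  refine ⟨subset_rfl, hh, fun f g hf hg => qlf_C0S_add hf hg, fun f g hf hg => qlf_C0S_mul hf hg,
    fun c f hf => qlf_C0S_smul c hf, ?_⟩
  have : {x : ↥(C0S X) | (x : X →ᵇ ℝ) ∈ C0S X} = Set.univ := by
    ext x; simp [x.2]
  rw [this]; exact isClosed_univ

lemma qlf_sgen_subset {h : X →ᵇ ℝ} (hh : h ∈ C0S X) : sgen (C0S X) h ⊆ C0S X :=
  Set.sInter_subset_of_mem (qlf_C0S_mem_family hh)

lemma qlf_self_mem_sgen (h : X →ᵇ ℝ) : h ∈ sgen (C0S X) h := by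
  intro S hS; exact hS.2.1

lemma qlf_add_mem_sgen {h f g : X →ᵇ ℝ} (hf : f ∈ sgen (C0S X) h) (hg : g ∈ sgen (C0S X) h) :
    f + g ∈ sgen (C0S X) h := by
  intro S hS; exact hS.2.2.1 f g (hf S hS) (hg S hS)

lemma qlf_smul_mem_sgen {h f : X →ᵇ ℝ} (c : ℝ) (hf : f ∈ sgen (C0S X) h) :
    c • f ∈ sgen (C0S X) h := by
  intro S hS; exact hS.2.2.2.2.1 c f (hf S hS)

lemma qlf_zero_mem_sgen (h : X →ᵇ ℝ) : (0 : X →ᵇ ℝ) ∈ sgen (C0S X) h := by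
  have := qlf_smul_mem_sgen (h := h) 0 (qlf_self_mem_sgen h)
  simpa using this

lemma qlf_sub_mem_sgen {h f g : X →ᵇ ℝ} (hf : f ∈ sgen (C0S X) h) (hg : g ∈ sgen (C0S X) h) :
    f - g ∈ sgen (C0S X) h := by
  have h2 : f + (-1:ℝ) • g = f - g := by
    rw [neg_one_smul ℝ g]; exact (sub_eq_add_neg f g).symm
  have := qlf_add_mem_sgen hf (qlf_smul_mem_sgen (-1) hg)
  rwa [h2] at this

/-- Key technical lemma: continuous functions of `h` vanishing at `0` lie in `B(h)`. -/
lemma qlf_comp_mem_sgen {h : X →ᵇ ℝ} (hh : h ∈ C0S X)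
    {φ : ℝ → ℝ} (hφ : Continuous φ) (hφ0 : φ 0 = 0) {F : X →ᵇ ℝ}
    (hF : ∀ x, F x = φ (h x)) : F ∈ sgen (C0S X) h := by
  intro S hS
  obtain ⟨hSsub, hhS, hSadd, hSmul, hSsmul, hSclosed⟩ := hS
  set s : Set ℝ := Set.Icc (-‖h‖) ‖h‖ with hs
  have h0s : (0:ℝ) ∈ s := ⟨neg_nonpos.2 (norm_nonneg h), norm_nonneg h⟩
  have hmem : ∀ x, h x ∈ s := fun x => by
    have := abs_le.mp (by simpa [Real.norm_eq_abs] using h.norm_coe_le_norm x)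
    exact ⟨this.1, this.2⟩
  haveI : Fact ((0:ℝ) ∈ s) := ⟨h0s⟩
  have h0 : ((0 : s) : ℝ) = 0 := rfl
  haveI : CompactSpace s := isCompact_iff_compactSpace.mp isCompact_Icc
  let ι : C(X, s) := ⟨fun x => ⟨h x, hmem x⟩, (map_continuous h).subtype_mk hmem⟩
  let Θ : C(s, ℝ)₀ → (X →ᵇ ℝ) := fun g => (mkOfCompact (g : C(s,ℝ))).compContinuous ι
  have Θapp : ∀ (g : C(s, ℝ)₀) (x : X), Θ g x = g ⟨h x, hmem x⟩ := fun g x => rfl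
  have ΘC0 : ∀ g : C(s, ℝ)₀, Θ g ∈ C0S X := by
    intro g
    have h1 : Tendsto (fun x => (⟨h x, hmem x⟩ : s)) (cocompact X) (nhds (0 : s)) := by
      rw [tendsto_subtype_rng]
      exact hh
    have h2 : Tendsto (fun x => g (⟨h x, hmem x⟩ : s)) (cocompact X) (nhds (g 0)) :=
      ((map_continuous g).continuousAt.tendsto).comp h1
    have : Tendsto (⇑(Θ g)) (cocompact X) (nhds 0) := by
      rw [map_zero g] at h2; exact h2
    exact this
  let Θ' : C(s, ℝ)₀ → ↥(C0S X) := fun g => ⟨Θ g, ΘC0 g⟩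
  have hΘcont : Continuous Θ' := by
    refine Continuous.subtype_mk ?_ _
    have c1 : Continuous (fun g : C(s, ℝ)₀ => (g : C(s, ℝ))) :=
      ContinuousMapZero.isClosedEmbedding_toContinuousMap.continuous
    have c2 : Continuous (fun g : C(s, ℝ) => mkOfCompact g) :=
      (Isometry.continuous (fun f g => by
        rw [edist_dist, edist_dist, BoundedContinuousFunction.dist_mkOfCompact]))
    exact (continuous_compContinuous ι).comp (c2.comp c1)
  have hclosed : IsClosed {g : C(s, ℝ)₀ | Θ g ∈ S} := by
    have : {g : C(s, ℝ)₀ | Θ g ∈ S} = Θ' ⁻¹' {x : ↥(C0S X) | (x : X →ᵇ ℝ) ∈ S} := rfl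
    rw [this]
    exact hSclosed.preimage hΘcont
  have key : ∀ g : C(s, ℝ)₀, Θ g ∈ S := by
    intro g
    induction g using ContinuousMapZero.induction_on_of_compact with
    | zero =>
      have : Θ 0 = (0:ℝ) • h := by
        ext x; simp [Θapp]
      rw [this]; exact hSsmul 0 h hhS
    | id =>
      have : Θ (ContinuousMapZero.id s) = h := by
        ext x; simp [Θapp, ContinuousMapZero.id]
        rfl
      rw [this]; exact hhS
    | star_id =>
      have : Θ (star (ContinuousMapZero.id s)) = h := by
        ext x; simp [Θapp, ContinuousMapZero.id]
        rfl
      rw [this]; exact hhS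
    | add f g hf hg =>
      have : Θ (f + g) = Θ f + Θ g := by ext x; simp [Θapp]
      rw [this]; exact hSadd _ _ hf hg
    | mul f g hf hg =>
      have : Θ (f * g) = Θ f * Θ g := by ext x; simp [Θapp]
      rw [this]; exact hSmul _ _ hf hg
    | smul r f hf =>
      have : Θ (r • f) = r • Θ f := by ext x; simp [Θapp]
      rw [this]; exact hSsmul _ _ hf
    | frequently f hf =>
      have : f ∈ closure {g : C(s, ℝ)₀ | Θ g ∈ S} := mem_closure_iff_frequently.2 hf
      exact hclosed.closure_subset this
  let φ₀ : C(s, ℝ)₀ := ⟨⟨fun t => φ (t : ℝ), hφ.comp continuous_subtype_val⟩, by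
    simp [h0, hφ0]⟩
  have : F = Θ φ₀ := by
    ext x; simp [Θapp, φ₀, hF x]
  rw [this]; exact key φ₀

lemma qlf_rho_zero (ρ : QLF (C0S X)) : ρ.toFun 0 = 0 := by
  have := ρ.smul_eq 0 0 qlf_C0S_zero
  simpa using this

lemma qlf_rho_add (ρ : QLF (C0S X)) {h f g : X →ᵇ ℝ} (hh : h ∈ C0S X)
    (hf : f ∈ sgen (C0S X) h) (hg : g ∈ sgen (C0S X) h) :
    ρ.toFun (f + g) = ρ.toFun f + ρ.toFun g := ρ.add_eq h hh f g hf hg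

/-- min with a nonnegative constant stays in the singly generated subalgebra. -/
lemma qlf_inf_const_mem_sgen {f : X →ᵇ ℝ} (hf : f ∈ C0S X) {c : ℝ} (hc : 0 ≤ c) :
    f ⊓ const X c ∈ sgen (C0S X) f := by
  apply qlf_comp_mem_sgen hf (φ := fun t => min t c)
  · exact continuous_id.min continuous_const
  · exact min_eq_left hc
  · intro x
    simp [coe_inf]

end QlfAux

section QlfAux2

open BoundedContinuousFunction

variable {X : Type u} [TopologicalSpace X]

/-- Lemma A: if `0 ≤ u ≤ v ≤ δ` and `v = δ` wherever `u ≠ 0`, then `ρ u ≤ ρ v`. -/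
lemma qlf_lemA (ρ : QLF (C0S X)) {u v : X →ᵇ ℝ} {δ : ℝ} (hδ : 0 ≤ δ)
    (hu : u ∈ C0S X) (hv : v ∈ C0S X)
    (hu0 : 0 ≤ u) (huv : u ≤ v) (hvδ : ∀ x, v x ≤ δ)
    (heq : ∀ x, u x ≠ 0 → v x = δ) :
    ρ.toFun u ≤ ρ.toFun v := by
  have hu0' : ∀ x, 0 ≤ u x := fun x => qlf_bcf_le_iff.mp hu0 x
  have huv' : ∀ x, u x ≤ v x := fun x => qlf_bcf_le_iff.mp huv x
  set h : X →ᵇ ℝ := u + v with hdef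
  have hhC : h ∈ C0S X := qlf_C0S_add hu hv
  have hu_mem : u ∈ sgen (C0S X) h := by
    apply qlf_comp_mem_sgen hhC (φ := fun t => max (t - δ) 0)
    · exact (continuous_id.sub continuous_const).max continuous_const
    · simp [hδ]
    · intro x
      have hx : h x = u x + v x := rfl
      by_cases hux : u x = 0
      · have : v x - δ ≤ 0 := sub_nonpos.2 (hvδ x)
        simp [hx, hux, max_eq_right this]
      · have hvx := heq x hux
        rw [hx, hvx]
        simp [max_eq_left (hu0' x)]
  have hv_mem : v ∈ sgen (C0S X) h := by
    apply qlf_comp_mem_sgen hhC (φ := fun t => min t δ)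
    · exact continuous_id.min continuous_const
    · exact min_eq_left hδ
    · intro x
      have hx : h x = u x + v x := rfl
      by_cases hux : u x = 0
      · rw [hx, hux, zero_add]
        exact (min_eq_left (hvδ x)).symm
      · have hvx := heq x hux
        rw [hx, hvx]
        have : δ ≤ u x + δ := le_add_of_nonneg_left (hu0' x)
        exact (min_eq_right this).symm
  have hw_mem : v - u ∈ sgen (C0S X) h := qlf_sub_mem_sgen hv_mem hu_mem
  have hadd : ρ.toFun v = ρ.toFun u + ρ.toFun (v - u) := by
    have := qlf_rho_add ρ hhC hu_mem hw_mem
    rwa [add_sub_cancel] at this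
  have hpos : 0 ≤ ρ.toFun (v - u) :=
    ρ.pos _ (qlf_sgen_subset hhC hw_mem) (sub_nonneg.2 huv)
  linarith

lemma qlf_sum_mem_sgen {h : X →ᵇ ℝ} (u : ℕ → X →ᵇ ℝ)
    (hu : ∀ i, u i ∈ sgen (C0S X) h) (n : ℕ) :
    (∑ i ∈ Finset.range n, u i) ∈ sgen (C0S X) h := by
  induction n with
  | zero => simpa using qlf_zero_mem_sgen h
  | succ n ih => rw [Finset.sum_range_succ]; exact qlf_add_mem_sgen ih (hu n)

lemma qlf_rho_sum (ρ : QLF (C0S X)) {h : X →ᵇ ℝ} (hh : h ∈ C0S X) (u : ℕ → X →ᵇ ℝ)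
    (hu : ∀ i, u i ∈ sgen (C0S X) h) (n : ℕ) :
    ρ.toFun (∑ i ∈ Finset.range n, u i) = ∑ i ∈ Finset.range n, ρ.toFun (u i) := by
  induction n with
  | zero => simpa using qlf_rho_zero ρ
  | succ n ih =>
    rw [Finset.sum_range_succ, Finset.sum_range_succ,
      qlf_rho_add ρ hh (qlf_sum_mem_sgen u hu n) (hu n), ih]

end QlfAux2

section QlfAux3

open BoundedContinuousFunction

variable {X : Type u} [TopologicalSpace X]

lemma qlf_real_layer_nonneg {a c δ : ℝ} (hδ : 0 ≤ δ) : 0 ≤ min a (c + δ) - min a c :=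
  sub_nonneg.2 (min_le_min le_rfl (by linarith))

lemma qlf_real_layer_le {a c δ : ℝ} (hδ : 0 ≤ δ) : min a (c + δ) - min a c ≤ δ := by
  rcases le_total a c with h | h
  · rw [min_eq_left (h.trans (by linarith)), min_eq_left h]; simp [hδ]
  · rw [min_eq_right h]
    have := min_le_right a (c + δ)
    linarith

lemma qlf_mono_nonneg (ρ : QLF (C0S X)) {M : ℝ}
    (hM : ∀ w : X →ᵇ ℝ, w ∈ C0S X → 0 ≤ w → w ≤ 1 → ρ.toFun w ≤ M)
    {f g : X →ᵇ ℝ} (hf : f ∈ C0S X) (hg : g ∈ C0S X) (hf0 : 0 ≤ f) (hfg : f ≤ g) :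
    ρ.toFun f ≤ ρ.toFun g := by
  have hf0' : ∀ x, 0 ≤ f x := fun x => qlf_bcf_le_iff.mp hf0 x
  have hfg' : ∀ x, f x ≤ g x := fun x => qlf_bcf_le_iff.mp hfg x
  have hg0' : ∀ x, 0 ≤ g x := fun x => le_trans (hf0' x) (hfg' x)
  have hM0 : 0 ≤ M := by
    have h1 : (0 : X →ᵇ ℝ) ≤ 1 := qlf_bcf_le_iff.2 (fun x => by norm_num)
    have := hM 0 qlf_C0S_zero le_rfl h1
    simpa [qlf_rho_zero ρ] using this
  set R : ℝ := ‖g‖ + 1 with hR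
  have hRpos : 0 < R := by positivity
  have key : ∀ n : ℕ, 0 < n → ρ.toFun f ≤ ρ.toFun g + R * M / n := by
    intro n hn
    obtain ⟨m, rfl⟩ : ∃ m, n = m + 1 := ⟨n - 1, (Nat.succ_pred_eq_of_pos hn).symm⟩
    set δ : ℝ := R / (m + 1) with hδdef
    have hδpos : 0 < δ := by positivity
    set Gf : ℕ → X →ᵇ ℝ := fun k => f ⊓ const X ((k : ℝ) * δ) with hGf
    set Gg : ℕ → X →ᵇ ℝ := fun k => g ⊓ const X ((k : ℝ) * δ) with hGg
    set uu : ℕ → X →ᵇ ℝ := fun k => Gf (k + 1) - Gf k with huu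
    set vv : ℕ → X →ᵇ ℝ := fun k => Gg (k + 1) - Gg k with hvv
    have hGfx : ∀ k x, Gf k x = min (f x) ((k : ℝ) * δ) := fun k x => by
      simp [hGf, coe_inf]
    have hGgx : ∀ k x, Gg k x = min (g x) ((k : ℝ) * δ) := fun k x => by
      simp [hGg, coe_inf]
    have hsucc : ∀ k : ℕ, ((k + 1 : ℕ) : ℝ) * δ = (k : ℝ) * δ + δ := fun k => by
      push_cast; ring
    have huux : ∀ k x, uu k x = min (f x) ((k : ℝ) * δ + δ) - min (f x) ((k : ℝ) * δ) :=
      fun k x => by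
      simp only [huu, coe_sub, Pi.sub_apply, hGfx, hsucc]
    have hvvx : ∀ k x, vv k x = min (g x) ((k : ℝ) * δ + δ) - min (g x) ((k : ℝ) * δ) :=
      fun k x => by
      simp only [hvv, coe_sub, Pi.sub_apply, hGgx, hsucc]
    have hGfmem : ∀ k, Gf k ∈ sgen (C0S X) f := fun k =>
      qlf_inf_const_mem_sgen hf (by positivity)
    have hGgmem : ∀ k, Gg k ∈ sgen (C0S X) g := fun k =>
      qlf_inf_const_mem_sgen hg (by positivity)
    have huumem : ∀ k, uu k ∈ sgen (C0S X) f := fun k =>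
      qlf_sub_mem_sgen (hGfmem _) (hGfmem _)
    have hvvmem : ∀ k, vv k ∈ sgen (C0S X) g := fun k =>
      qlf_sub_mem_sgen (hGgmem _) (hGgmem _)
    have huu0 : ∀ k x, 0 ≤ uu k x := fun k x => by
      rw [huux]; exact qlf_real_layer_nonneg hδpos.le
    have hvv0 : ∀ k x, 0 ≤ vv k x := fun k x => by
      rw [hvvx]; exact qlf_real_layer_nonneg hδpos.le
    have huuδ : ∀ k x, uu k x ≤ δ := fun k x => by
      rw [huux]; exact qlf_real_layer_le hδpos.le
    have hvvδ : ∀ k x, vv k x ≤ δ := fun k x => by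
      rw [hvvx]; exact qlf_real_layer_le hδpos.le
    have hgR : ∀ x, g x < R := fun x => by
      have h1 : g x ≤ |g x| := le_abs_self _
      have h2 : |g x| ≤ ‖g‖ := by
        simpa [Real.norm_eq_abs] using g.norm_coe_le_norm x
      rw [hR]; linarith
    have hfR : ∀ x, f x < R := fun x => lt_of_le_of_lt (hfg' x) (hgR x)
    have hmδ : ((m + 1 : ℕ) : ℝ) * δ = R := by
      rw [hδdef]; push_cast; field_simp
    have htelf : (∑ k ∈ Finset.range (m + 1), uu k) = f := by
      rw [huu, Finset.sum_range_sub Gf]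
      ext x
      have h1 : Gf (m + 1) x = f x := by
        rw [hGfx, hmδ]; exact min_eq_left (hfR x).le
      have h2 : Gf 0 x = 0 := by
        rw [hGfx]; simpa using min_eq_right (hf0' x)
      simp [h1, h2]
    have htelg : (∑ k ∈ Finset.range (m + 1), vv k) = g := by
      rw [hvv, Finset.sum_range_sub Gg]
      ext x
      have h1 : Gg (m + 1) x = g x := by
        rw [hGgx, hmδ]; exact min_eq_left (hgR x).le
      have h2 : Gg 0 x = 0 := by
        rw [hGgx]; simpa using min_eq_right (hg0' x)
      simp [h1, h2]
    have hrf : ρ.toFun f = ∑ k ∈ Finset.range (m + 1), ρ.toFun (uu k) := by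
      rw [← qlf_rho_sum ρ hf uu huumem, htelf]
    have hrg : ρ.toFun g = ∑ k ∈ Finset.range (m + 1), ρ.toFun (vv k) := by
      rw [← qlf_rho_sum ρ hg vv hvvmem, htelg]
    have hzero_of_le : ∀ (j : ℕ) (x : X), f x ≤ ((j : ℝ) + 1) * δ → uu (j + 1) x = 0 := by
      intro j x hx
      rw [huux]
      push_cast
      have h1 : f x ≤ ((j : ℝ) + 1) * δ + δ := by linarith
      rw [min_eq_left h1, min_eq_left hx]
      ring
    have hvδ_of_lt : ∀ (j : ℕ) (x : X), ((j : ℝ) + 1) * δ < f x → vv j x = δ := by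
      intro j x hx
      rw [hvvx]
      have h2 : (j : ℝ) * δ + δ ≤ g x := by
        have := hfg' x; nlinarith
      rw [min_eq_right h2, min_eq_right (by nlinarith : (j : ℝ) * δ ≤ g x)]
      ring
    have hstep : ∀ j, ρ.toFun (uu (j + 1)) ≤ ρ.toFun (vv j) := by
      intro j
      apply qlf_lemA ρ hδpos.le (qlf_sgen_subset hf (huumem _)) (qlf_sgen_subset hg (hvvmem _))
        (qlf_bcf_le_iff.2 (huu0 _))
      · refine qlf_bcf_le_iff.2 (fun x => ?_)
        rcases le_or_gt (f x) (((j : ℝ) + 1) * δ) with hx | hx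
        · rw [hzero_of_le j x hx]; exact hvv0 j x
        · rw [hvδ_of_lt j x hx]; exact huuδ _ x
      · exact hvvδ j
      · intro x hx
        rcases le_or_gt (f x) (((j : ℝ) + 1) * δ) with h | h
        · exact absurd (hzero_of_le j x h) hx
        · exact hvδ_of_lt j x h
    have h00 : ρ.toFun (uu 0) ≤ δ * M := by
      set w : X →ᵇ ℝ := δ⁻¹ • uu 0 with hwdef
      have hwx : ∀ x, w x = δ⁻¹ * uu 0 x := fun x => by
        simp [hwdef, coe_smul]
      have hwsgen : w ∈ sgen (C0S X) f := qlf_smul_mem_sgen _ (huumem 0)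
      have hwC : w ∈ C0S X := qlf_sgen_subset hf hwsgen
      have hw0 : (0 : X →ᵇ ℝ) ≤ w := qlf_bcf_le_iff.2 fun x => by
        rw [hwx]
        exact mul_nonneg (by positivity) (huu0 0 x)
      have hw1 : w ≤ 1 := qlf_bcf_le_iff.2 fun x => by
        rw [hwx]
        have := huuδ 0 x
        calc δ⁻¹ * uu 0 x ≤ δ⁻¹ * δ := by
              apply mul_le_mul_of_nonneg_left this (by positivity)
        _ = 1 := inv_mul_cancel₀ hδpos.ne'
      have hMw := hM w hwC hw0 hw1
      have hww : δ • w = uu 0 := by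
        rw [hwdef, smul_smul, mul_inv_cancel₀ hδpos.ne', one_smul]
      have hsm : ρ.toFun (δ • w) = δ * ρ.toFun w := ρ.smul_eq δ w hwC
      rw [← hww, hsm]
      exact mul_le_mul_of_nonneg_left hMw hδpos.le
    have hvpos : ∀ k, 0 ≤ ρ.toFun (vv k) := fun k =>
      ρ.pos _ (qlf_sgen_subset hg (hvvmem k)) (qlf_bcf_le_iff.2 (hvv0 k))
    have hmain : ρ.toFun f ≤ ρ.toFun g + δ * M := by
      have e1 : (∑ k ∈ Finset.range (m + 1), ρ.toFun (uu k)) =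
          (∑ j ∈ Finset.range m, ρ.toFun (uu (j + 1))) + ρ.toFun (uu 0) :=
        Finset.sum_range_succ' _ m
      have e2 : (∑ j ∈ Finset.range m, ρ.toFun (uu (j + 1))) ≤
          ∑ j ∈ Finset.range m, ρ.toFun (vv j) :=
        Finset.sum_le_sum fun j _ => hstep j
      have e3 : (∑ j ∈ Finset.range m, ρ.toFun (vv j)) ≤
          ∑ j ∈ Finset.range (m + 1), ρ.toFun (vv j) := by
        rw [Finset.sum_range_succ]
        linarith [hvpos m]
      rw [hrf, hrg] at *
      linarith
    have : δ * M = R * M / (m + 1) := by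
      rw [hδdef]; ring
    rw [this] at hmain
    exact_mod_cast hmain
  refine le_of_forall_pos_le_add (fun ε hε => ?_)
  obtain ⟨n, hn⟩ := exists_nat_gt (R * M / ε)
  have hn0 : 0 < n := by
    rcases Nat.eq_zero_or_pos n with h | h
    · exfalso
      rw [h] at hn
      have : 0 ≤ R * M / ε := by positivity
      norm_cast at hn
      linarith
    · exact h
  have h1 := key n hn0
  have h2 : R * M / n ≤ ε := by
    rw [div_le_iff₀ (by exact_mod_cast hn0 : (0:ℝ) < n)]
    have := (div_lt_iff₀ hε).mp hn
    nlinarith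
  linarith

end QlfAux3

section QlfAux4

open BoundedContinuousFunction

variable {X : Type u} [TopologicalSpace X]

lemma qlf_mono_of_bounded (ρ : QLF (C0S X)) {M : ℝ}
    (hM : ∀ w : X →ᵇ ℝ, w ∈ C0S X → 0 ≤ w → w ≤ 1 → ρ.toFun w ≤ M)
    {f g : X →ᵇ ℝ} (hf : f ∈ C0S X) (hg : g ∈ C0S X) (hfg : f ≤ g) :
    ρ.toFun f ≤ ρ.toFun g := by
  have hfg' : ∀ x, f x ≤ g x := fun x => qlf_bcf_le_iff.mp hfg x
  -- negative parts
  have hfneg_mem : f ⊓ const X 0 ∈ sgen (C0S X) f := qlf_inf_const_mem_sgen hf le_rfl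
  have hgneg_mem : g ⊓ const X 0 ∈ sgen (C0S X) g := qlf_inf_const_mem_sgen hg le_rfl
  have hfposm : f - f ⊓ const X 0 ∈ sgen (C0S X) f :=
    qlf_sub_mem_sgen (qlf_self_mem_sgen f) hfneg_mem
  have hgposm : g - g ⊓ const X 0 ∈ sgen (C0S X) g :=
    qlf_sub_mem_sgen (qlf_self_mem_sgen g) hgneg_mem
  have hinfx : ∀ (h : X →ᵇ ℝ) x, (h ⊓ const X 0) x = min (h x) 0 := fun h x => by
    simp [coe_inf]
  have hsplitf : ρ.toFun f = ρ.toFun (f - f ⊓ const X 0) + ρ.toFun (f ⊓ const X 0) := by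
    have := qlf_rho_add ρ hf hfposm hfneg_mem
    rwa [sub_add_cancel] at this
  have hsplitg : ρ.toFun g = ρ.toFun (g - g ⊓ const X 0) + ρ.toFun (g ⊓ const X 0) := by
    have := qlf_rho_add ρ hg hgposm hgneg_mem
    rwa [sub_add_cancel] at this
  -- positive parts compare
  have hpos_le : ρ.toFun (f - f ⊓ const X 0) ≤ ρ.toFun (g - g ⊓ const X 0) := by
    apply qlf_mono_nonneg ρ hM (qlf_sgen_subset hf hfposm) (qlf_sgen_subset hg hgposm)
    · refine qlf_bcf_le_iff.2 (fun x => ?_)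
      have : (f - f ⊓ const X 0) x = f x - min (f x) 0 := by simp [coe_sub, hinfx]
      rw [this]
      have := min_le_left (f x) 0
      simpa using sub_nonneg.2 this
    · refine qlf_bcf_le_iff.2 (fun x => ?_)
      have e1 : (f - f ⊓ const X 0) x = f x - min (f x) 0 := by simp [coe_sub, hinfx]
      have e2 : (g - g ⊓ const X 0) x = g x - min (g x) 0 := by simp [coe_sub, hinfx]
      rw [e1, e2]
      rcases le_total (f x) 0 with h1 | h1 <;> rcases le_total (g x) 0 with h2 | h2 <;>
        simp [min_eq_left, min_eq_right, h1, h2] <;> linarith [hfg' x]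
  -- negative parts compare
  have hneg_le : ρ.toFun (f ⊓ const X 0) ≤ ρ.toFun (g ⊓ const X 0) := by
    set a : X →ᵇ ℝ := (-1 : ℝ) • (f ⊓ const X 0) with ha
    set b : X →ᵇ ℝ := (-1 : ℝ) • (g ⊓ const X 0) with hb
    have hax : ∀ x, a x = -(min (f x) 0) := fun x => by
      simp [ha, coe_smul, hinfx]
    have hbx : ∀ x, b x = -(min (g x) 0) := fun x => by
      simp [hb, coe_smul, hinfx]
    have haC : a ∈ C0S X := qlf_C0S_smul _ (qlf_sgen_subset hf hfneg_mem)
    have hbC : b ∈ C0S X := qlf_C0S_smul _ (qlf_sgen_subset hg hgneg_mem)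
    have hb0 : (0 : X →ᵇ ℝ) ≤ b := qlf_bcf_le_iff.2 fun x => by
      rw [hbx]; simp [min_le_right (g x) 0]
    have hba : b ≤ a := qlf_bcf_le_iff.2 fun x => by
      rw [hax, hbx]
      have : min (f x) 0 ≤ min (g x) 0 := min_le_min (hfg' x) le_rfl
      linarith
    have := qlf_mono_nonneg ρ hM hbC haC hb0 hba
    have hra : ρ.toFun a = -ρ.toFun (f ⊓ const X 0) := by
      rw [ha, ρ.smul_eq _ _ (qlf_sgen_subset hf hfneg_mem)]; ring
    have hrb : ρ.toFun b = -ρ.toFun (g ⊓ const X 0) := by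
      rw [hb, ρ.smul_eq _ _ (qlf_sgen_subset hg hgneg_mem)]; ring
    rw [hra, hrb] at this
    linarith
  linarith

lemma qlf_isClosed_C0S : IsClosed (C0S X) := by
  apply isClosed_of_closure_subset
  intro F hF
  rw [Metric.mem_closure_iff] at hF
  rw [C0S, Set.mem_setOf_eq, Metric.tendsto_nhds]
  intro ε hε
  obtain ⟨G, hG, hdist⟩ := hF (ε / 2) (by linarith)
  have hG' := Metric.tendsto_nhds.mp hG (ε / 2) (by linarith)
  filter_upwards [hG'] with x hx
  have h1 : dist (F x) (G x) ≤ dist F G := dist_coe_le_dist x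
  calc dist (F x) 0 ≤ dist (F x) (G x) + dist (G x) 0 := dist_triangle _ _ _
  _ < ε / 2 + ε / 2 := add_lt_add (lt_of_le_of_lt h1 hdist) hx
  _ = ε := by ring

lemma qlf_sum_C0S (u : ℕ → X →ᵇ ℝ) (hu : ∀ i, u i ∈ C0S X) (n : ℕ) :
    (∑ i ∈ Finset.range n, u i) ∈ C0S X := by
  induction n with
  | zero => simpa using qlf_C0S_zero
  | succ n ih => rw [Finset.sum_range_succ]; exact qlf_C0S_add ih (hu n)

lemma qlf_bounded_of_monotone (ρ : QLF (C0S X))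
    (hmono : ∀ f g : X →ᵇ ℝ, f ∈ C0S X → g ∈ C0S X → f ≤ g → ρ.toFun f ≤ ρ.toFun g) :
    qnorm ρ ≠ ∞ := by
  intro htop
  have hex : ∀ n : ℕ, ∃ f : X →ᵇ ℝ, f ∈ C0S X ∧ 0 ≤ f ∧ f ≤ 1 ∧ (4 : ℝ) ^ n < ρ.toFun f := by
    intro n
    have h1 : (ENNReal.ofReal ((4 : ℝ) ^ n)) < qnorm ρ := by
      rw [htop]; exact ENNReal.ofReal_lt_top
    rw [qnorm, lt_iSup_iff] at h1
    obtain ⟨f, hf⟩ := h1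
    rw [lt_iSup_iff] at hf
    obtain ⟨hfs, hlt⟩ := hf
    exact ⟨f, hfs.1, hfs.2.1, hfs.2.2,
      (ENNReal.ofReal_lt_ofReal_iff_of_nonneg (by positivity)).mp hlt⟩
  choose f hfC hf0 hf1 hfbig using hex
  have hnorm : ∀ n : ℕ, ‖(2⁻¹ : ℝ) ^ n • f n‖ ≤ ((1 : ℝ) / 2) ^ n := by
    intro n
    rw [norm_le (by positivity)]
    intro x
    have h0 := qlf_bcf_le_iff.mp (hf0 n) x
    have h1 := qlf_bcf_le_iff.mp (hf1 n) x
    simp only [coe_zero, Pi.zero_apply] at h0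
    simp only [coe_one, Pi.one_apply] at h1
    have e1 : ((2⁻¹ : ℝ) ^ n • f n) x = 2⁻¹ ^ n * f n x := by
      simp [coe_smul]
    rw [e1, Real.norm_eq_abs, abs_of_nonneg (mul_nonneg (by positivity) h0)]
    calc (2⁻¹ : ℝ) ^ n * f n x ≤ 2⁻¹ ^ n * 1 := by
          apply mul_le_mul_of_nonneg_left h1 (by positivity)
    _ = ((1 : ℝ) / 2) ^ n := by norm_num
  have hsum : Summable (fun n : ℕ => (2⁻¹ : ℝ) ^ n • f n) :=
    Summable.of_norm_bounded summable_geometric_two hnorm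
  set g : X →ᵇ ℝ := ∑' n : ℕ, (2⁻¹ : ℝ) ^ n • f n with hgdef
  have hhas : HasSum (fun n : ℕ => (2⁻¹ : ℝ) ^ n • f n) g := hsum.hasSum
  have htend := hhas.tendsto_sum_nat
  have hgC : g ∈ C0S X := by
    apply qlf_isClosed_C0S.mem_of_tendsto htend
    exact Filter.Eventually.of_forall fun n =>
      qlf_sum_C0S _ (fun i => qlf_C0S_smul _ (hfC i)) n
  have hpw : ∀ x, HasSum (fun n : ℕ => ((2⁻¹ : ℝ) ^ n • f n) x) (g x) := fun x =>
    hhas.map (AddMonoidHom.mk' (fun F : X →ᵇ ℝ => F x) (fun F G => rfl)) (continuous_eval_const x)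
  have hle : ∀ n : ℕ, (2⁻¹ : ℝ) ^ n • f n ≤ g := by
    intro n
    refine qlf_bcf_le_iff.2 (fun x => ?_)
    refine le_hasSum (hpw x) n (fun j _ => ?_)
    have := qlf_bcf_le_iff.mp (hf0 j) x
    simp only [coe_smul, Pi.smul_apply, smul_eq_mul]
    exact mul_nonneg (by positivity) this
  have hcontra : ∀ n : ℕ, (2 : ℝ) ^ n < ρ.toFun g := by
    intro n
    have h1 := hmono _ g (qlf_C0S_smul _ (hfC n)) hgC (hle n)
    have h2 : ρ.toFun ((2⁻¹ : ℝ) ^ n • f n) = (2⁻¹ : ℝ) ^ n * ρ.toFun (f n) :=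
      ρ.smul_eq _ _ (hfC n)
    have h3 := hfbig n
    have h4 : (2 : ℝ) ^ n = (2⁻¹ : ℝ) ^ n * 4 ^ n := by
      rw [← mul_pow]; norm_num
    calc (2 : ℝ) ^ n = (2⁻¹ : ℝ) ^ n * 4 ^ n := h4
    _ < (2⁻¹ : ℝ) ^ n * ρ.toFun (f n) := by
        apply mul_lt_mul_of_pos_left h3 (by positivity)
    _ = ρ.toFun ((2⁻¹ : ℝ) ^ n • f n) := h2.symm
    _ ≤ ρ.toFun g := h1
  obtain ⟨n, hn⟩ := pow_unbounded_of_one_lt (ρ.toFun g) (by norm_num : (1 : ℝ) < 2)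
  exact absurd (hcontra n) (not_lt.mpr hn.le)

end QlfAux4

/-- a quasi-linear functional on `C₀(X)` is monotone iff it is bounded. -/
theorem qlf_monotone_iff_bounded {X : Type u} [TopologicalSpace X]
    [LocallyCompactSpace X] [T2Space X] [ConnectedSpace X] (ρ : QLF (C0S X)) :
    (∀ f g : X →ᵇ ℝ, f ∈ C0S X → g ∈ C0S X → f ≤ g → ρ.toFun f ≤ ρ.toFun g) ↔
      qnorm ρ ≠ ∞ := by
  constructor
  · exact fun hmono => qlf_bounded_of_monotone ρ hmono
  · intro htop f g hf hg hfg
    set M : ℝ := (qnorm ρ).toReal with hM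
    have hbd : ∀ w : X →ᵇ ℝ, w ∈ C0S X → 0 ≤ w → w ≤ 1 → ρ.toFun w ≤ M := by
      intro w hw hw0 hw1
      have hle : ENNReal.ofReal (ρ.toFun w) ≤ qnorm ρ := by
        rw [qnorm]
        exact le_iSup₂ (f := fun (v : X →ᵇ ℝ)
          (_ : v ∈ {f : X →ᵇ ℝ | f ∈ C0S X ∧ 0 ≤ f ∧ f ≤ 1}) =>
          ENNReal.ofReal (ρ.toFun v)) w ⟨hw, hw0, hw1⟩
      rcases le_or_gt (ρ.toFun w) 0 with h | h
      · exact h.trans ENNReal.toReal_nonneg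
      · have := ENNReal.toReal_mono htop hle
        rwa [ENNReal.toReal_ofReal h.le] at this
    exact qlf_mono_of_bounded ρ hbd hf hg hfg
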